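/- arXiv:1306.6655 — 7 statements merged into one kernel-verified Lean document; each statement's English description precedes it below -/
import Mathlib

section
/- Let n = (n1,n2) with n1 + n2 > 0 and let K be a complex (n1+n2)×(n1+n2) matrix with operator norm ‖K‖ ≤ 1. Then the polynomial p(z1,z2) = det(I_{n1+n2} − K Z_n(z1,z2)) has no zeros in the open unit bidisk, i.e., p(z1,z2) ≠ 0 whenever |z1| < 1 and |z2| < 1. -/
open Matrix

noncomputable def opNorm {m : ℕ} (K : Matrix (Fin m) (Fin m) ℂ) : ℝ :=
  ‖Matrix.toEuclideanCLM (𝕜 := ℂ) K‖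

noncomputable def Zn (n1 n2 : ℕ) (z1 z2 : ℂ) : Matrix (Fin (n1 + n2)) (Fin (n1 + n2)) ℂ :=
  Matrix.diagonal fun i => if (i : ℕ) < n1 then z1 else z2

lemma diag_norm_le {m : ℕ} (d : Fin m → ℂ) (c : ℝ) (hc : 0 ≤ c) (hd : ∀ i, ‖d i‖ ≤ c) :
    ‖Matrix.toEuclideanCLM (𝕜 := ℂ) (Matrix.diagonal d)‖ ≤ c := by
  apply ContinuousLinearMap.opNorm_le_bound _ hc
  intro x
  have hx : Matrix.toEuclideanCLM (𝕜 := ℂ) (Matrix.diagonal d) x =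
      (WithLp.equiv 2 (Fin m → ℂ)).symm (Matrix.diagonal d *ᵥ (WithLp.equiv 2 (Fin m → ℂ) x)) := rfl
  rw [hx]
  rw [EuclideanSpace.norm_eq, EuclideanSpace.norm_eq]
  have h1 : ∀ i, ‖(WithLp.equiv 2 (Fin m → ℂ)).symm
      (Matrix.diagonal d *ᵥ (WithLp.equiv 2 (Fin m → ℂ) x)) i‖ ^ 2 ≤ c ^ 2 * ‖x i‖ ^ 2 := by
    intro i
    have : (WithLp.equiv 2 (Fin m → ℂ)).symm
        (Matrix.diagonal d *ᵥ (WithLp.equiv 2 (Fin m → ℂ) x)) i = d i * x i := by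
      simp [Matrix.mulVec_diagonal]
    rw [this, norm_mul, mul_pow]
    gcongr
    exact hd i
  calc √(∑ i, ‖(WithLp.equiv 2 (Fin m → ℂ)).symm
        (Matrix.diagonal d *ᵥ (WithLp.equiv 2 (Fin m → ℂ) x)) i‖ ^ 2)
      ≤ √(∑ i, c ^ 2 * ‖x i‖ ^ 2) := by
        apply Real.sqrt_le_sqrt
        exact Finset.sum_le_sum fun i _ => h1 i
    _ = c * √(∑ i, ‖x i‖ ^ 2) := by
        rw [← Finset.mul_sum, Real.sqrt_mul (by positivity), Real.sqrt_sq hc]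

theorem stmt2 (n1 n2 : ℕ) (hn : 0 < n1 + n2)
    (K : Matrix (Fin (n1 + n2)) (Fin (n1 + n2)) ℂ) (hK : opNorm K ≤ 1) :
    ∀ z1 z2 : ℂ, ‖z1‖ < 1 → ‖z2‖ < 1 →
      (1 - K * Zn n1 n2 z1 z2).det ≠ 0 := by
  intro z1 z2 h1 h2
  set c : ℝ := max ‖z1‖ ‖z2‖ with hc
  have hc0 : 0 ≤ c := le_max_of_le_left (norm_nonneg _)
  have hc1 : c < 1 := max_lt h1 h2
  have hZ : ‖Matrix.toEuclideanCLM (𝕜 := ℂ) (Zn n1 n2 z1 z2)‖ ≤ c := by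
    apply diag_norm_le _ c hc0
    intro i
    by_cases h : (i : ℕ) < n1 <;> simp only [h, if_true, if_false]
    · exact le_max_left _ _
    · exact le_max_right _ _
  have hnorm : ‖Matrix.toEuclideanCLM (𝕜 := ℂ) (K * Zn n1 n2 z1 z2)‖ < 1 := by
    rw [_root_.map_mul]
    calc ‖Matrix.toEuclideanCLM (𝕜 := ℂ) K * Matrix.toEuclideanCLM (𝕜 := ℂ) (Zn n1 n2 z1 z2)‖
        ≤ ‖Matrix.toEuclideanCLM (𝕜 := ℂ) K‖ * ‖Matrix.toEuclideanCLM (𝕜 := ℂ) (Zn n1 n2 z1 z2)‖ :=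
          norm_mul_le _ _
      _ ≤ 1 * c := mul_le_mul hK hZ (norm_nonneg _) (le_trans (norm_nonneg _) hK)
      _ < 1 := by simpa using hc1
  have hU : IsUnit (1 - Matrix.toEuclideanCLM (𝕜 := ℂ) (K * Zn n1 n2 z1 z2)) :=
    (Units.oneSub _ hnorm).isUnit
  have hU2 : IsUnit (1 - K * Zn n1 n2 z1 z2) := by
    have := hU.map (Matrix.toEuclideanCLM (𝕜 := ℂ)).symm
    simpa using this
  have := hU2.map (Matrix.detMonoidHom)
  simpa using this.ne_zero
end

section
/- Let p1 and p2 be non-constant bivariate complex polynomials with p1(0,0) = p2(0,0) = 1, of bidegrees n' = (n1',n2') and n'' = (n1'',n2'') respectively. Suppose there exist matrices K1 of size (n1'+n2')×(n1'+n2') with ‖K1‖ = s(p1)^{-1} and p1(z1,z2) = det(I − K1 Z_{n'}(z1,z2)), and K2 of size (n1''+n2'')×(n1''+n2'') with ‖K2‖ = s(p2)^{-1} and p2(z1,z2) = det(I − K2 Z_{n''}(z1,z2)). Then, with m = n' + n'' = (n1'+n1'', n2'+n2''), there exists a matrix K of size (n1'+n1''+n2'+n2'') with ‖K‖ = s(p1p2)^{-1}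 such that p1(z1,z2)·p2(z1,z2) = det(I − K Z_m(z1,z2)) for all (z1,z2) ∈ ℂ². -/
open MvPolynomial

noncomputable def stabilityRadius (p : MvPolynomial (Fin 2) ℂ) : ℝ :=
  sSup {r : ℝ | 0 < r ∧ ∀ z1 z2 : ℂ, ‖z1‖ < r → ‖z2‖ < r →
    eval ![z1, z2] p ≠ 0}

open Matrix
open scoped Matrix.Norms.L2Operator

set_option linter.unusedSectionVars false

section NormLemmas

variable {ι κ ι' κ' : Type*} [Fintype ι] [DecidableEq ι] [Fintype κ] [DecidableEq κ]
  [Fintype ι'] [DecidableEq ι'] [Fintype κ'] [DecidableEq κ']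

lemma enorm (v : ι → ℂ) :
    ‖(WithLp.equiv 2 (ι → ℂ)).symm v‖ = Real.sqrt (∑ i, ‖v i‖^2) := by
  rw [EuclideanSpace.norm_eq]; rfl

lemma key2 (M : Matrix ι κ ℂ) (v : κ → ℂ) :
    ∑ i, ‖(M *ᵥ v) i‖^2 ≤ ‖M‖^2 * ∑ j, ‖v j‖^2 := by
  have h := M.l2_opNorm_mulVec ((WithLp.equiv 2 (κ → ℂ)).symm v)
  have h1 : ‖(EuclideanSpace.equiv ι ℂ).symm (M *ᵥ (WithLp.equiv 2 (κ → ℂ)).symm v : ι → ℂ)‖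
      = Real.sqrt (∑ i, ‖(M *ᵥ v) i‖^2) := enorm _
  rw [h1, _root_.enorm] at h
  have h2 : Real.sqrt (∑ i, ‖(M *ᵥ v) i‖^2) ≤ Real.sqrt (‖M‖^2 * ∑ j, ‖v j‖^2) := by
    rw [Real.sqrt_mul (sq_nonneg _), Real.sqrt_sq (norm_nonneg _)]
    exact h
  nlinarith [Real.sq_sqrt (Finset.sum_nonneg fun i _ => sq_nonneg ‖(M *ᵥ v) i‖ : (0:ℝ) ≤ ∑ i, ‖(M *ᵥ v) i‖^2),
    Real.sq_sqrt (mul_nonneg (sq_nonneg ‖M‖) (Finset.sum_nonneg fun j _ => sq_nonneg ‖v j‖) : (0:ℝ) ≤ ‖M‖^2 * ∑ j, ‖v j‖^2),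
    Real.sqrt_nonneg (∑ i, ‖(M *ᵥ v) i‖^2), Real.sqrt_nonneg (‖M‖^2 * ∑ j, ‖v j‖^2)]

lemma key (M : Matrix ι κ ℂ) (c : ℝ) (hc : 0 ≤ c)
    (h : ∀ v : κ → ℂ, ∑ i, ‖(M *ᵥ v) i‖^2 ≤ c^2 * ∑ j, ‖v j‖^2) : ‖M‖ ≤ c := by
  rw [Matrix.l2_opNorm_def]
  apply ContinuousLinearMap.opNorm_le_bound _ hc
  intro x
  have hx : x = (WithLp.equiv 2 (κ → ℂ)).symm (WithLp.equiv 2 (κ → ℂ) x) := rfl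
  rw [hx]
  have : ((Matrix.toEuclideanLin.trans LinearMap.toContinuousLinearMap) M)
      ((WithLp.equiv 2 (κ → ℂ)).symm (WithLp.equiv 2 (κ → ℂ) x))
      = (WithLp.equiv 2 (ι → ℂ)).symm (M *ᵥ (WithLp.equiv 2 (κ → ℂ) x)) := rfl
  rw [this, _root_.enorm, _root_.enorm]
  set v := (WithLp.equiv 2 (κ → ℂ)) x with hv
  have h4 : Real.sqrt (∑ i, ‖(M *ᵥ v) i‖^2) ≤ Real.sqrt (c^2 * ∑ j, ‖v j‖^2) :=
    Real.sqrt_le_sqrt (h v)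
  rw [Real.sqrt_mul (sq_nonneg _), Real.sqrt_sq hc] at h4
  exact h4

lemma norm_reindex_le (e1 : ι ≃ ι') (e2 : κ ≃ κ') (M : Matrix ι κ ℂ) :
    ‖reindex e1 e2 M‖ ≤ ‖M‖ := by
  apply key _ _ (norm_nonneg M)
  intro v
  have hmv : (reindex e1 e2 M) *ᵥ v = (M *ᵥ (v ∘ e2)) ∘ e1.symm := by
    rw [Matrix.reindex_apply, Matrix.submatrix_mulVec_equiv]
    simp
  rw [hmv]
  calc ∑ i, ‖((M *ᵥ (v ∘ e2)) ∘ e1.symm) i‖^2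
      = ∑ i, ‖(M *ᵥ (v ∘ e2)) i‖^2 := e1.symm.sum_comp (fun i => ‖(M *ᵥ (v ∘ e2)) i‖^2)
    _ ≤ ‖M‖^2 * ∑ j, ‖(v ∘ e2) j‖^2 := key2 M _
    _ = ‖M‖^2 * ∑ j, ‖v j‖^2 := by rw [show ∑ j, ‖(v ∘ e2) j‖^2 = ∑ j, ‖v j‖^2 from e2.sum_comp (fun j => ‖v j‖^2)]

lemma norm_reindex (e1 : ι ≃ ι') (e2 : κ ≃ κ') (M : Matrix ι κ ℂ) :
    ‖reindex e1 e2 M‖ = ‖M‖ := by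
  refine le_antisymm (norm_reindex_le e1 e2 M) ?_
  have := norm_reindex_le e1.symm e2.symm (reindex e1 e2 M)
  simpa using this

lemma sum_sq_sum_elim (f : ι → ℂ) (g : κ → ℂ) :
    ∑ i : ι ⊕ κ, ‖Sum.elim f g i‖^2 = ∑ i, ‖f i‖^2 + ∑ j, ‖g j‖^2 := by
  rw [Fintype.sum_sum_type]; rfl

lemma norm_fromBlocks (A : Matrix ι ι ℂ) (B : Matrix κ κ ℂ) :
    ‖fromBlocks A 0 0 B‖ = max ‖A‖ ‖B‖ := by
  have hmv : ∀ (u : ι → ℂ) (w : κ → ℂ),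
      (fromBlocks A 0 0 B) *ᵥ Sum.elim u w = Sum.elim (A *ᵥ u) (B *ᵥ w) := by
    intro u w
    rw [Matrix.fromBlocks_mulVec]
    simp
  refine le_antisymm ?_ (max_le ?_ ?_)
  · apply key _ _ (le_max_of_le_left (norm_nonneg A))
    intro v
    have hv : v = Sum.elim (v ∘ Sum.inl) (v ∘ Sum.inr) := by
      funext i; cases i <;> rfl
    rw [hv, hmv, sum_sq_sum_elim, sum_sq_sum_elim]
    have h1 := key2 A (v ∘ Sum.inl)
    have h2 := key2 B (v ∘ Sum.inr)
    have hA : ‖A‖^2 ≤ (max ‖A‖ ‖B‖)^2 := by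
      apply pow_le_pow_left₀ (norm_nonneg A) (le_max_left _ _)
    have hB : ‖B‖^2 ≤ (max ‖A‖ ‖B‖)^2 := by
      apply pow_le_pow_left₀ (norm_nonneg B) (le_max_right _ _)
    have p1 : (0:ℝ) ≤ ∑ j, ‖(v ∘ Sum.inl) j‖^2 := Finset.sum_nonneg fun _ _ => sq_nonneg _
    have p2 : (0:ℝ) ≤ ∑ j, ‖(v ∘ Sum.inr) j‖^2 := Finset.sum_nonneg fun _ _ => sq_nonneg _
    nlinarith
  · apply key _ _ (norm_nonneg _)
    intro u
    have := key2 (fromBlocks A 0 0 B) (Sum.elim u 0)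
    rw [hmv, sum_sq_sum_elim, sum_sq_sum_elim] at this
    simpa using le_trans (by simp [Finset.sum_nonneg fun (i:ι) _ => sq_nonneg ‖(A *ᵥ u) i‖]) this
  · apply key _ _ (norm_nonneg _)
    intro w
    have := key2 (fromBlocks A 0 0 B) (Sum.elim 0 w)
    rw [hmv, sum_sq_sum_elim, sum_sq_sum_elim] at this
    simpa using le_trans (by simp [Finset.sum_nonneg fun (i:κ) _ => sq_nonneg ‖(B *ᵥ w) i‖]) this

end NormLemmas

noncomputable def blockE (a b c d : ℕ) : (Fin (a+b) ⊕ Fin (c+d)) ≃ Fin ((a+c)+(b+d)) :=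
  (Equiv.sumCongr finSumFinEquiv.symm finSumFinEquiv.symm).trans <|
  (Equiv.sumSumSumComm (Fin a) (Fin b) (Fin c) (Fin d)).trans <|
  (Equiv.sumCongr finSumFinEquiv finSumFinEquiv).trans finSumFinEquiv

lemma blockE_prop_left (a b c d : ℕ) (x : Fin (a+b)) :
    ((blockE a b c d (Sum.inl x) : ℕ) < a + c) ↔ (x : ℕ) < a := by
  cases x using Fin.addCases with
  | left u => simp [blockE]; try omega
  | right u => simp [blockE]; try omega

lemma blockE_prop_right (a b c d : ℕ) (y : Fin (c+d)) :
    ((blockE a b c d (Sum.inr y) : ℕ) < a + c) ↔ (y : ℕ) < c := by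
  cases y using Fin.addCases with
  | left u => simp [blockE]; try omega
  | right u => simp [blockE]; try omega

lemma Zn_reindex (a b c d : ℕ) (z1 z2 : ℂ) :
    Zn (a+c) (b+d) z1 z2 = (reindex (blockE a b c d) (blockE a b c d))
      (Matrix.diagonal (Sum.elim
        (fun x : Fin (a+b) => if (x:ℕ) < a then z1 else z2)
        (fun y : Fin (c+d) => if (y:ℕ) < c then z1 else z2))) := by
  rw [Matrix.reindex_apply, Matrix.submatrix_diagonal_equiv, Zn,
    Matrix.diagonal_eq_diagonal_iff]
  intro i
  rcases h : (blockE a b c d).symm i with x | y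
  · have hi : i = blockE a b c d (Sum.inl x) := by rw [← h, Equiv.apply_symm_apply]
    rw [Function.comp_apply, h, Sum.elim_inl, hi]
    exact if_congr (blockE_prop_left a b c d x) rfl rfl
  · have hi : i = blockE a b c d (Sum.inr y) := by rw [← h, Equiv.apply_symm_apply]
    rw [Function.comp_apply, h, Sum.elim_inr, hi]
    exact if_congr (blockE_prop_right a b c d y) rfl rfl

lemma det_block (a b c d : ℕ) (z1 z2 : ℂ)
    (K1 : Matrix (Fin (a+b)) (Fin (a+b)) ℂ) (K2 : Matrix (Fin (c+d)) (Fin (c+d)) ℂ) :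
    (1 - (reindex (blockE a b c d) (blockE a b c d) (fromBlocks K1 0 0 K2)) *
        Zn (a+c) (b+d) z1 z2).det
      = (1 - K1 * Zn a b z1 z2).det * (1 - K2 * Zn c d z1 z2).det := by
  rw [Zn_reindex]
  set e := blockE a b c d
  set D := Matrix.diagonal (Sum.elim
        (fun x : Fin (a+b) => if (x:ℕ) < a then z1 else z2)
        (fun y : Fin (c+d) => if (y:ℕ) < c then z1 else z2)) with hDdef
  have hmul : (reindex e e (fromBlocks K1 0 0 K2)) * (reindex e e D)
      = reindex e e ((fromBlocks K1 0 0 K2) * D) := by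
    simp only [Matrix.reindex_apply, Matrix.submatrix_mul_equiv]
  have hsub : reindex e e (1 - (fromBlocks K1 0 0 K2) * D)
      = (1 : Matrix (Fin ((a+c)+(b+d))) (Fin ((a+c)+(b+d))) ℂ)
        - reindex e e ((fromBlocks K1 0 0 K2) * D) := by
    rw [Matrix.reindex_apply, Matrix.submatrix_sub]
    simp only [Pi.sub_apply]
    rw [Matrix.submatrix_one_equiv, ← Matrix.reindex_apply]
  rw [hmul, ← hsub, Matrix.det_reindex_self]
  have hD : D = fromBlocks (Zn a b z1 z2) 0 0 (Zn c d z1 z2) := by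
    rw [hDdef, Zn, Zn, Matrix.fromBlocks_diagonal]
  rw [hD, Matrix.fromBlocks_multiply]
  simp only [Matrix.mul_zero, Matrix.zero_mul, add_zero, zero_add]
  have h1 : (1 : Matrix (Fin (a+b) ⊕ Fin (c+d)) (Fin (a+b) ⊕ Fin (c+d)) ℂ)
      = fromBlocks 1 0 0 1 := by rw [Matrix.fromBlocks_one]
  rw [h1, sub_eq_add_neg, Matrix.fromBlocks_neg, Matrix.fromBlocks_add]
  simp only [add_zero, neg_zero]
  rw [← sub_eq_add_neg, ← sub_eq_add_neg, Matrix.det_fromBlocks_zero₂₁]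

def Sset (p : MvPolynomial (Fin 2) ℂ) : Set ℝ :=
  {r : ℝ | 0 < r ∧ ∀ z1 z2 : ℂ, ‖z1‖ < r → ‖z2‖ < r →
    eval ![z1, z2] p ≠ 0}

lemma Sset_down {p : MvPolynomial (Fin 2) ℂ} {r r' : ℝ} (h : r ∈ Sset p)
    (h1 : 0 < r') (h2 : r' ≤ r) : r' ∈ Sset p :=
  ⟨h1, fun z1 z2 a1 a2 => h.2 z1 z2 (lt_of_lt_of_le a1 h2) (lt_of_lt_of_le a2 h2)⟩

lemma Sset_nonempty {p : MvPolynomial (Fin 2) ℂ} (h0 : eval ![0,0] p ≠ 0) :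
    ∃ r, r ∈ Sset p := by
  have hc : Continuous fun z : ℂ × ℂ => eval ![z.1, z.2] p := by
    have h1 : Continuous fun x : Fin 2 → ℂ => eval x p := MvPolynomial.continuous_eval p
    have h2 : Continuous fun z : ℂ × ℂ => (![z.1, z.2] : Fin 2 → ℂ) := by
      apply continuous_pi
      intro i
      fin_cases i
      · exact continuous_fst
      · exact continuous_snd
    exact h1.comp h2
  have hopen : IsOpen {z : ℂ × ℂ | eval ![z.1, z.2] p ≠ 0} := by
    have : {z : ℂ × ℂ | eval ![z.1, z.2] p ≠ 0}
        = (fun z : ℂ × ℂ => eval ![z.1, z.2] p) ⁻¹' ({0}ᶜ) := rfl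
    rw [this]
    exact (isOpen_compl_singleton).preimage hc
  have h00 : ((0 : ℂ), (0 : ℂ)) ∈ {z : ℂ × ℂ | eval ![z.1, z.2] p ≠ 0} := h0
  obtain ⟨ε, hε, hball⟩ := Metric.isOpen_iff.mp hopen _ h00
  refine ⟨ε/2, by positivity, fun z1 z2 a1 a2 => ?_⟩
  have hmem : (z1, z2) ∈ Metric.ball ((0:ℂ), (0:ℂ)) ε := by
    rw [Metric.mem_ball, Prod.dist_eq]
    simp only [dist_zero_right]
    have h2 : ε/2 < ε := by linarith
    exact lt_of_le_of_lt (max_le (le_of_lt a1) (le_of_lt a2)) h2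
  have h3 : eval ![((z1,z2) : ℂ × ℂ).1, ((z1,z2) : ℂ × ℂ).2] p ≠ 0 := hball hmem
  simpa using h3

lemma Sset_mul (p1 p2 : MvPolynomial (Fin 2) ℂ) :
    Sset (p1 * p2) = Sset p1 ∩ Sset p2 := by
  ext r
  constructor
  · rintro ⟨hr, h⟩
    refine ⟨⟨hr, fun z1 z2 a1 a2 => ?_⟩, ⟨hr, fun z1 z2 a1 a2 => ?_⟩⟩
    · intro hz; exact h z1 z2 a1 a2 (by rw [_root_.map_mul, hz, zero_mul])
    · intro hz; exact h z1 z2 a1 a2 (by rw [_root_.map_mul, hz, mul_zero])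
  · rintro ⟨⟨hr, h1⟩, ⟨_, h2⟩⟩
    exact ⟨hr, fun z1 z2 a1 a2 => by
      rw [_root_.map_mul]; exact mul_ne_zero (h1 z1 z2 a1 a2) (h2 z1 z2 a1 a2)⟩

lemma sSup_inter {S1 S2 : Set ℝ}
    (hd1 : ∀ {r r'}, r ∈ S1 → 0 < r' → r' ≤ r → r' ∈ S1)
    (hd2 : ∀ {r r'}, r ∈ S2 → 0 < r' → r' ≤ r → r' ∈ S2)
    (hb1 : BddAbove S1) (hb2 : BddAbove S2)
    {r1 r2 : ℝ} (h1 : r1 ∈ S1) (hr1 : 0 < r1) (h2 : r2 ∈ S2) (hr2 : 0 < r2) :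
    sSup (S1 ∩ S2) = min (sSup S1) (sSup S2) := by
  have hne : (S1 ∩ S2).Nonempty := by
    refine ⟨min r1 r2, hd1 h1 (lt_min hr1 hr2) (min_le_left _ _),
      hd2 h2 (lt_min hr1 hr2) (min_le_right _ _)⟩
  have hb : BddAbove (S1 ∩ S2) := hb1.mono Set.inter_subset_left
  refine le_antisymm (le_min (csSup_le_csSup hb1 hne Set.inter_subset_left)
    (csSup_le_csSup hb2 hne Set.inter_subset_right)) ?_
  rw [le_csSup_iff hb hne]
  intro b hbub
  by_contra hlt
  push_neg at hlt
  have hs1 : 0 < sSup S1 := lt_of_lt_of_le hr1 (le_csSup hb1 h1)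
  have hs2 : 0 < sSup S2 := lt_of_lt_of_le hr2 (le_csSup hb2 h2)
  set t := min (sSup S1) (sSup S2) with ht
  have hmin : 0 < t := lt_min hs1 hs2
  obtain ⟨r, hbr, hrt⟩ := exists_between hlt
  set r0 := max r (t/2) with hr0
  have hr0pos : 0 < r0 := lt_of_lt_of_le (by linarith) (le_max_right _ _)
  have hr0t : r0 < t := max_lt hrt (by linarith)
  have hmem1 : r0 ∈ S1 := by
    obtain ⟨x, hx, hrx⟩ := exists_lt_of_lt_csSup ⟨r1, h1⟩
      (lt_of_lt_of_le hr0t (min_le_left _ _))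
    exact hd1 hx hr0pos (le_of_lt hrx)
  have hmem2 : r0 ∈ S2 := by
    obtain ⟨x, hx, hrx⟩ := exists_lt_of_lt_csSup ⟨r2, h2⟩
      (lt_of_lt_of_le hr0t (min_le_right _ _))
    exact hd2 hx hr0pos (le_of_lt hrx)
  have := hbub ⟨hmem1, hmem2⟩
  have : r ≤ b := le_trans (le_max_left _ _) this
  linarith

lemma stabilityRadius_eq (p : MvPolynomial (Fin 2) ℂ) :
    stabilityRadius p = sSup (Sset p) := rfl

lemma eval_zero_eq (p : MvPolynomial (Fin 2) ℂ) : eval ![0,0] p = coeff 0 p := by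
  have h : (![0,0] : Fin 2 → ℂ) = 0 := by funext i; fin_cases i <;> rfl
  rw [h, MvPolynomial.eval_zero]
  rfl

lemma nonconst_bddAbove (p : MvPolynomial (Fin 2) ℂ)
    (hnc : 0 < p.totalDegree) (n1 n2 : ℕ) (K : Matrix (Fin (n1 + n2)) (Fin (n1 + n2)) ℂ)
    (hKn : opNorm K = (stabilityRadius p)⁻¹)
    (hK : ∀ z1 z2 : ℂ, eval ![z1, z2] p = (1 - K * Zn n1 n2 z1 z2).det) :
    BddAbove (Sset p) := by
  by_contra hb
  have hs : stabilityRadius p = 0 := Real.sSup_of_not_bddAbove hb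
  rw [hs, _root_.inv_zero] at hKn
  have hK0 : K = 0 := by
    have hn : ‖K‖ = 0 := hKn
    exact norm_eq_zero.mp hn
  have hone : ∀ z1 z2 : ℂ, eval ![z1, z2] p = 1 := by
    intro z1 z2
    rw [hK z1 z2, hK0]
    simp
  have hp : p = C 1 := by
    apply MvPolynomial.funext
    intro x
    have hx : (![x 0, x 1] : Fin 2 → ℂ) = x := by
      funext i; fin_cases i <;> rfl
    rw [eval_C, ← hx, hone]
  rw [hp, totalDegree_C] at hnc
  exact lt_irrefl 0 hnc

lemma inv_min_eq_max_inv {a b : ℝ} (ha : 0 < a) (hb : 0 < b) :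
    (min a b)⁻¹ = max a⁻¹ b⁻¹ := by
  rcases le_total a b with h | h
  · rw [min_eq_left h, max_eq_left (by exact inv_anti₀ ha h)]
  · rw [min_eq_right h, max_eq_right (by exact inv_anti₀ hb h)]

theorem stmt3 (n1' n2' n1'' n2'' : ℕ) (p1 p2 : MvPolynomial (Fin 2) ℂ)
    (hnc1 : 0 < p1.totalDegree) (hnc2 : 0 < p2.totalDegree)
    (h01 : coeff 0 p1 = 1) (h02 : coeff 0 p2 = 1)
    (hd1 : p1.degreeOf 0 = n1') (hd2 : p1.degreeOf 1 = n2')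
    (hd3 : p2.degreeOf 0 = n1'') (hd4 : p2.degreeOf 1 = n2'')
    (K1 : Matrix (Fin (n1' + n2')) (Fin (n1' + n2')) ℂ)
    (hK1n : opNorm K1 = (stabilityRadius p1)⁻¹)
    (hK1 : ∀ z1 z2 : ℂ, eval ![z1, z2] p1 = (1 - K1 * Zn n1' n2' z1 z2).det)
    (K2 : Matrix (Fin (n1'' + n2'')) (Fin (n1'' + n2'')) ℂ)
    (hK2n : opNorm K2 = (stabilityRadius p2)⁻¹)
    (hK2 : ∀ z1 z2 : ℂ, eval ![z1, z2] p2 = (1 - K2 * Zn n1'' n2'' z1 z2).det) :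
    ∃ K : Matrix (Fin ((n1' + n1'') + (n2' + n2''))) (Fin ((n1' + n1'') + (n2' + n2''))) ℂ,
      opNorm K = (stabilityRadius (p1 * p2))⁻¹ ∧
      ∀ z1 z2 : ℂ, eval ![z1, z2] p1 * eval ![z1, z2] p2 =
        (1 - K * Zn (n1' + n1'') (n2' + n2'') z1 z2).det := by
  -- stability radii facts
  have h0p1 : eval ![0,0] p1 ≠ 0 := by rw [eval_zero_eq, h01]; exact one_ne_zero
  have h0p2 : eval ![0,0] p2 ≠ 0 := by rw [eval_zero_eq, h02]; exact one_ne_zero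
  obtain ⟨r1, hr1⟩ := Sset_nonempty h0p1
  obtain ⟨r2, hr2⟩ := Sset_nonempty h0p2
  have hb1 : BddAbove (Sset p1) := nonconst_bddAbove p1 hnc1 n1' n2' K1 hK1n hK1
  have hb2 : BddAbove (Sset p2) := nonconst_bddAbove p2 hnc2 n1'' n2'' K2 hK2n hK2
  have hs1pos : 0 < stabilityRadius p1 := by
    rw [stabilityRadius_eq]
    exact lt_of_lt_of_le hr1.1 (le_csSup hb1 hr1)
  have hs2pos : 0 < stabilityRadius p2 := by
    rw [stabilityRadius_eq]
    exact lt_of_lt_of_le hr2.1 (le_csSup hb2 hr2)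
  have hsmul : stabilityRadius (p1 * p2) = min (stabilityRadius p1) (stabilityRadius p2) := by
    rw [stabilityRadius_eq, stabilityRadius_eq, stabilityRadius_eq, Sset_mul]
    exact sSup_inter (fun h a b => Sset_down h a b) (fun h a b => Sset_down h a b)
      hb1 hb2 hr1 hr1.1 hr2 hr2.1
  -- the matrix
  set e := blockE n1' n2' n1'' n2''
  refine ⟨reindex e e (fromBlocks K1 0 0 K2), ?_, ?_⟩
  · have hno : opNorm (reindex e e (fromBlocks K1 0 0 K2)) = ‖reindex e e (fromBlocks K1 0 0 K2)‖ := rfl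
    rw [hno, norm_reindex, norm_fromBlocks]
    have e1 : ‖K1‖ = opNorm K1 := rfl
    have e2 : ‖K2‖ = opNorm K2 := rfl
    rw [e1, e2, hK1n, hK2n, hsmul, inv_min_eq_max_inv hs1pos hs2pos]
  · intro z1 z2
    rw [hK1, hK2]
    exact (det_block n1' n2' n1'' n2'' z1 z2 K1 K2).symm
end

section
/- Every stable irreducible non-constant bivariate complex polynomial p is scattering Schur; that is, p and its reverse ←p have no common non-unit polynomial factor. -/
open MvPolynomial

/-- The reverse of a bivariate polynomial of bidegree `(n1, n2)`:
the coefficient of `z1^j z2^k` is the conjugate of the coefficient of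
`z1^(n1-j) z2^(n2-k)` in `p`. -/
noncomputable def revPoly (n1 n2 : ℕ) (p : MvPolynomial (Fin 2) ℂ) :
    MvPolynomial (Fin 2) ℂ :=
  ∑ j ∈ Finset.range (n1 + 1), ∑ k ∈ Finset.range (n2 + 1),
    monomial (Finsupp.single (0 : Fin 2) j + Finsupp.single (1 : Fin 2) k)
      ((starRingEnd ℂ)
        (coeff (Finsupp.single (0 : Fin 2) (n1 - j) + Finsupp.single (1 : Fin 2) (n2 - k)) p))

open Finset

lemma fin2_dec (d : Fin 2 →₀ ℕ) :
    d = Finsupp.single (0 : Fin 2) (d 0) + Finsupp.single (1 : Fin 2) (d 1) := by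
  ext i
  fin_cases i <;> simp [Finsupp.single_apply]

lemma app0 (j k : ℕ) : (Finsupp.single (0 : Fin 2) j + Finsupp.single (1 : Fin 2) k) 0 = j := by
  simp [Finsupp.single_apply]

lemma app1 (j k : ℕ) : (Finsupp.single (0 : Fin 2) j + Finsupp.single (1 : Fin 2) k) 1 = k := by
  simp [Finsupp.single_apply]

lemma single_add_single_inj {j k j' k' : ℕ}
    (h : Finsupp.single (0 : Fin 2) j + Finsupp.single (1 : Fin 2) k
       = Finsupp.single (0 : Fin 2) j' + Finsupp.single (1 : Fin 2) k') : j = j' ∧ k = k' := by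
  constructor
  · have := congrArg (fun d : Fin 2 →₀ ℕ => d 0) h
    simpa [app0] using this
  · have := congrArg (fun d : Fin 2 →₀ ℕ => d 1) h
    simpa [app1] using this

lemma sum_grid_eq {M : Type*} [AddCommMonoid M] (n1 n2 : ℕ) (p : MvPolynomial (Fin 2) ℂ)
    (hd1 : p.degreeOf 0 = n1) (hd2 : p.degreeOf 1 = n2)
    (F : (Fin 2 →₀ ℕ) → M) (hF : ∀ d, coeff d p = 0 → F d = 0) :
    ∑ j ∈ range (n1 + 1), ∑ k ∈ range (n2 + 1),
      F (Finsupp.single (0 : Fin 2) j + Finsupp.single (1 : Fin 2) k)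
    = ∑ d ∈ p.support, F d := by
  have hsup : ∀ d ∈ p.support, d 0 ≤ n1 ∧ d 1 ≤ n2 := by
    intro d hd
    constructor
    · rw [← hd1, degreeOf_eq_sup]; exact Finset.le_sup (f := fun m => m 0) hd
    · rw [← hd2, degreeOf_eq_sup]; exact Finset.le_sup (f := fun m => m 1) hd
  rw [← Finset.sum_product']
  have hinj : ∀ a ∈ range (n1 + 1) ×ˢ range (n2 + 1), ∀ b ∈ range (n1 + 1) ×ˢ range (n2 + 1),
      (fun jk : ℕ × ℕ => Finsupp.single (0 : Fin 2) jk.1 + Finsupp.single (1 : Fin 2) jk.2) a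
      = (fun jk : ℕ × ℕ => Finsupp.single (0 : Fin 2) jk.1 + Finsupp.single (1 : Fin 2) jk.2) b
      → a = b := by
    intro a _ b _ h
    obtain ⟨h1, h2⟩ := single_add_single_inj h
    exact Prod.ext h1 h2
  rw [← Finset.sum_image hinj]
  refine (Finset.sum_subset ?_ ?_).symm
  · intro d hd
    rw [Finset.mem_image]
    refine ⟨(d 0, d 1), ?_, (fin2_dec d).symm⟩
    rw [Finset.mem_product, Finset.mem_range, Finset.mem_range]
    exact ⟨Nat.lt_succ_of_le (hsup d hd).1, Nat.lt_succ_of_le (hsup d hd).2⟩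
  · intro d _ hd
    exact hF d (by simpa [MvPolynomial.mem_support_iff, not_not] using hd)


lemma rep (n1 n2 : ℕ) (p : MvPolynomial (Fin 2) ℂ)
    (hd1 : p.degreeOf 0 = n1) (hd2 : p.degreeOf 1 = n2) :
    p = ∑ j ∈ range (n1 + 1), ∑ k ∈ range (n2 + 1),
      monomial (Finsupp.single (0 : Fin 2) j + Finsupp.single (1 : Fin 2) k)
        (coeff (Finsupp.single (0 : Fin 2) j + Finsupp.single (1 : Fin 2) k) p) := by
  rw [sum_grid_eq n1 n2 p hd1 hd2 (fun d => monomial d (coeff d p))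
      (fun d h => by simp [h])]
  exact (support_sum_monomial_coeff p).symm

lemma eval_grid (n1 n2 : ℕ) (p : MvPolynomial (Fin 2) ℂ)
    (hd1 : p.degreeOf 0 = n1) (hd2 : p.degreeOf 1 = n2) (z1 z2 : ℂ) :
    eval ![z1, z2] p = ∑ j ∈ range (n1 + 1), ∑ k ∈ range (n2 + 1),
      coeff (Finsupp.single (0 : Fin 2) j + Finsupp.single (1 : Fin 2) k) p * (z1 ^ j * z2 ^ k) := by
  have h := sum_grid_eq n1 n2 p hd1 hd2
      (fun d => coeff d p * (z1 ^ d 0 * z2 ^ d 1)) (fun d hc => by simp [hc])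
  simp only [app0, app1] at h
  refine Eq.trans ?_ h.symm
  rw [eval_eq']
  apply Finset.sum_congr rfl
  intro d _
  rw [Fin.prod_univ_two]
  simp


lemma eval_rev (n1 n2 : ℕ) (p : MvPolynomial (Fin 2) ℂ)
    (hd1 : p.degreeOf 0 = n1) (hd2 : p.degreeOf 1 = n2) (w1 w2 : ℂ)
    (h1 : w1 ≠ 0) (h2 : w2 ≠ 0) :
    eval ![w1, w2] (revPoly n1 n2 p)
      = w1 ^ n1 * w2 ^ n2 *
        (starRingEnd ℂ) (eval ![((starRingEnd ℂ) w1)⁻¹, ((starRingEnd ℂ) w2)⁻¹] p) := by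
  have key : ∀ (j n : ℕ) (w : ℂ), w ≠ 0 → j ≤ n → w ^ n * (w⁻¹) ^ j = w ^ (n - j) := by
    intro j n w hw hj
    rw [inv_pow, ← pow_sub₀ w hw hj]
  have L : eval ![w1, w2] (revPoly n1 n2 p)
      = ∑ j ∈ range (n1 + 1), ∑ k ∈ range (n2 + 1),
        (starRingEnd ℂ)
          (coeff (Finsupp.single (0 : Fin 2) (n1 - j) + Finsupp.single (1 : Fin 2) (n2 - k)) p)
          * (w1 ^ j * w2 ^ k) := by
    unfold revPoly
    rw [map_sum]
    apply Finset.sum_congr rfl; intro j _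
    rw [map_sum]
    apply Finset.sum_congr rfl; intro k _
    rw [eval_monomial, Finsupp.prod_fintype _ _ (fun i => pow_zero _), Fin.prod_univ_two]
    simp [app0, app1]
  rw [L]
  have hc1 : (starRingEnd ℂ) (((starRingEnd ℂ) w1)⁻¹) = w1⁻¹ := by
    rw [map_inv₀, Complex.conj_conj]
  have hc2 : (starRingEnd ℂ) (((starRingEnd ℂ) w2)⁻¹) = w2⁻¹ := by
    rw [map_inv₀, Complex.conj_conj]
  rw [eval_grid n1 n2 p hd1 hd2, map_sum, Finset.mul_sum]
  conv_lhs => rw [← Finset.sum_range_reflect]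
  apply Finset.sum_congr rfl; intro j hj
  rw [map_sum, Finset.mul_sum]
  conv_lhs => rw [← Finset.sum_range_reflect]
  apply Finset.sum_congr rfl; intro k hk
  have hj' : j ≤ n1 := Nat.lt_succ_iff.mp (Finset.mem_range.mp hj)
  have hk' : k ≤ n2 := Nat.lt_succ_iff.mp (Finset.mem_range.mp hk)
  have ej : n1 + 1 - 1 - j = n1 - j := by omega
  have ek : n2 + 1 - 1 - k = n2 - k := by omega
  rw [ej, ek]
  have ej2 : n1 - (n1 - j) = j := Nat.sub_sub_self hj'
  have ek2 : n2 - (n2 - k) = k := Nat.sub_sub_self hk'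
  rw [ej2, ek2, map_mul, map_mul, map_pow, map_pow, hc1, hc2]
  rw [← key j n1 w1 h1 hj', ← key k n2 w2 h2 hk']
  ring

lemma circle_pt (g : Polynomial ℂ) (hg : g ≠ 0) :
    ∃ w : ℂ, ‖w‖ = 1 ∧ ¬ g.IsRoot w := by
  set h : ℕ → ℂ := fun t => ((t : ℂ) - Complex.I) / ((t : ℂ) + Complex.I) with hh
  have hne : ∀ t : ℕ, (t : ℂ) + Complex.I ≠ 0 := by
    intro t heq
    have := congrArg Complex.im heq
    simp at this
  have habs : ∀ t : ℕ, ‖h t‖ = 1 := by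
    intro t
    rw [hh]
    simp only [norm_div]
    have h1 : ‖(t : ℂ) - Complex.I‖ = ‖(t : ℂ) + Complex.I‖ := by
      rw [Complex.norm_def, Complex.norm_def, Complex.normSq_apply, Complex.normSq_apply]
      simp
    rw [h1, div_self (ne_of_gt (norm_pos_iff.mpr (hne t)))]
  have hinj : Function.Injective h := by
    intro a b hab
    rw [hh] at hab
    simp only at hab
    rw [div_eq_div_iff (hne a) (hne b)] at hab
    have him := congrArg Complex.im hab
    simp [Complex.add_im, Complex.sub_im, Complex.mul_im, Complex.add_re, Complex.sub_re] at him
    have : (a : ℝ) = b := by linarith [him]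
    exact_mod_cast this
  have hfin := Polynomial.finite_setOf_isRoot hg
  have : ((Set.range h) \ {x | g.IsRoot x}).Nonempty :=
    ((Set.infinite_range_of_injective hinj).diff hfin).nonempty
  obtain ⟨w, hwmem, hwroot⟩ := this
  obtain ⟨t, rfl⟩ := hwmem
  exact ⟨h t, habs t, hwroot⟩

lemma exists_zero (n1 n2 : ℕ) (p : MvPolynomial (Fin 2) ℂ)
    (hd1 : p.degreeOf 0 = n1) (hd2 : p.degreeOf 1 = n2) (hn1 : 0 < n1)
    (hstable : ∀ z1 z2 : ℂ, ‖z1‖ ≤ 1 → ‖z2‖ ≤ 1 →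
      eval ![z1, z2] p ≠ 0) :
    ∃ w1 w2 : ℂ, 1 ≤ ‖w1‖ ∧ 1 ≤ ‖w2‖ ∧ eval ![w1, w2] p = 0 := by
  have hp0 : p ≠ 0 := by
    intro h
    exact hstable 0 0 (by simp) (by simp) (by simp [h])
  -- a monomial with d 0 = n1
  obtain ⟨d, hdmem, hdeq⟩ := Finset.exists_mem_eq_sup p.support
    (Finset.nonempty_iff_ne_empty.mpr (by rwa [Ne, MvPolynomial.support_eq_empty])) (fun m => m 0)
  have hd1' : (p.support.sup fun m => m 0) = n1 := by rw [← degreeOf_eq_sup]; exact hd1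
  have hd0 : d 0 = n1 := by rw [← hd1', hdeq]
  have hd1le : d 1 ≤ n2 := by
    rw [← hd2, degreeOf_eq_sup]
    exact Finset.le_sup (f := fun m => m 1) hdmem
  -- leading coefficient polynomial in z2
  set g : Polynomial ℂ := ∑ k ∈ range (n2 + 1),
    Polynomial.C (coeff (Finsupp.single (0 : Fin 2) n1 + Finsupp.single (1 : Fin 2) k) p)
      * Polynomial.X ^ k with hg
  have hgc : ∀ m : ℕ, m ≤ n2 → g.coeff m
      = coeff (Finsupp.single (0 : Fin 2) n1 + Finsupp.single (1 : Fin 2) m) p := by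
    intro m hm
    rw [hg, Polynomial.finset_sum_coeff]
    simp only [Polynomial.coeff_C_mul, Polynomial.coeff_X_pow, mul_ite, mul_one, mul_zero]
    rw [Finset.sum_ite_eq (Finset.range (n2 + 1)) m]
    simp [Nat.lt_succ_of_le hm]
  have hgne : g ≠ 0 := by
    intro h0
    have hc := hgc (d 1) hd1le
    rw [h0] at hc
    have : coeff d p ≠ 0 := (mem_support_iff).mp hdmem
    apply this
    rw [fin2_dec d, hd0, ← hc, Polynomial.coeff_zero]
  obtain ⟨w2, hw2abs, hw2root⟩ := circle_pt g hgne
  -- the slice polynomial in z1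
  set q1 : Polynomial ℂ := ∑ j ∈ range (n1 + 1),
    Polynomial.C (∑ k ∈ range (n2 + 1),
      coeff (Finsupp.single (0 : Fin 2) j + Finsupp.single (1 : Fin 2) k) p * w2 ^ k)
      * Polynomial.X ^ j with hq1
  have hq1c : q1.coeff n1 = Polynomial.eval w2 g := by
    rw [hq1, Polynomial.finset_sum_coeff]
    simp only [Polynomial.coeff_C_mul, Polynomial.coeff_X_pow, mul_ite, mul_one, mul_zero]
    rw [Finset.sum_ite_eq (Finset.range (n1 + 1)) n1]
    simp only [Finset.mem_range, Nat.lt_succ_self, if_true]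
    rw [hg]
    simp [Polynomial.eval_finset_sum]
  have hq1cne : q1.coeff n1 ≠ 0 := by
    rw [hq1c]; exact hw2root
  have hdeg : 0 < q1.degree := by
    have h1 : (n1 : WithBot ℕ) ≤ q1.degree := Polynomial.le_degree_of_ne_zero hq1cne
    have h2 : (0 : WithBot ℕ) < (n1 : WithBot ℕ) := by exact_mod_cast hn1
    exact lt_of_lt_of_le h2 h1
  obtain ⟨w1, hw1root⟩ := Complex.exists_root hdeg
  have heval : eval ![w1, w2] p = 0 := by
    rw [eval_grid n1 n2 p hd1 hd2 w1 w2]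
    have := hw1root
    rw [Polynomial.IsRoot, hq1, Polynomial.eval_finset_sum] at this
    simp only [Polynomial.eval_mul, Polynomial.eval_C, Polynomial.eval_pow,
      Polynomial.eval_X] at this
    rw [← this]
    apply Finset.sum_congr rfl
    intro j _
    rw [Finset.sum_mul]
    apply Finset.sum_congr rfl
    intro k _
    ring
  have hw1abs : 1 ≤ ‖w1‖ := by
    by_contra hlt
    push_neg at hlt
    exact hstable w1 w2 (le_of_lt hlt) (le_of_eq hw2abs) heval
  exact ⟨w1, w2, hw1abs, le_of_eq hw2abs.symm, heval⟩

lemma exists_zero' (n1 n2 : ℕ) (p : MvPolynomial (Fin 2) ℂ)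
    (hd1 : p.degreeOf 0 = n1) (hd2 : p.degreeOf 1 = n2) (hn2 : 0 < n2)
    (hstable : ∀ z1 z2 : ℂ, ‖z1‖ ≤ 1 → ‖z2‖ ≤ 1 →
      eval ![z1, z2] p ≠ 0) :
    ∃ w1 w2 : ℂ, 1 ≤ ‖w1‖ ∧ 1 ≤ ‖w2‖ ∧ eval ![w1, w2] p = 0 := by
  set f := Equiv.swap (0 : Fin 2) 1 with hf
  have hcomp : ∀ z1 z2 : ℂ, (![z1, z2] ∘ f) = ![z2, z1] := by
    intro z1 z2
    funext i
    fin_cases i <;> simp [hf, Equiv.swap_apply_left, Equiv.swap_apply_right]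
  have heval : ∀ z1 z2 : ℂ, eval ![z1, z2] (rename f p) = eval ![z2, z1] p := by
    intro z1 z2
    rw [eval_rename, hcomp]
  have hr1 : (rename f p).degreeOf 0 = n2 := by
    have := degreeOf_rename_of_injective (p := p) (f := ⇑f) (Equiv.injective f) 1
    rw [show f 1 = 0 from Equiv.swap_apply_right 0 1] at this
    rw [this, hd2]
  have hr2 : (rename f p).degreeOf 1 = n1 := by
    have := degreeOf_rename_of_injective (p := p) (f := ⇑f) (Equiv.injective f) 0
    rw [show f 0 = 1 from Equiv.swap_apply_left 0 1] at this
    rw [this, hd1]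
  obtain ⟨w1, w2, ha1, ha2, hz⟩ := exists_zero n2 n1 (rename f p) hr1 hr2 hn2
    (fun z1 z2 h1 h2 => by rw [heval]; exact hstable z2 z1 h2 h1)
  rw [heval] at hz
  exact ⟨w2, w1, ha2, ha1, hz⟩


theorem stmt6 (n1 n2 : ℕ) (p : MvPolynomial (Fin 2) ℂ)
    (hnc : 0 < p.totalDegree)
    (hd1 : p.degreeOf 0 = n1) (hd2 : p.degreeOf 1 = n2)
    (hstable : ∀ z1 z2 : ℂ, ‖z1‖ ≤ 1 → ‖z2‖ ≤ 1 →
      eval ![z1, z2] p ≠ 0)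
    (hirr : Irreducible p) :
    ∀ q : MvPolynomial (Fin 2) ℂ, q ∣ p → q ∣ revPoly n1 n2 p → IsUnit q := by
  intro q hqp hqrev
  obtain ⟨r, hr⟩ := hqp
  rcases hirr.isUnit_or_isUnit hr with h | h
  · exact h
  exfalso
  have hassoc : Associated q p := ⟨h.unit, by rw [IsUnit.unit_spec, ← hr]⟩
  have hprev : p ∣ revPoly n1 n2 p := hassoc.symm.dvd.trans hqrev
  obtain ⟨s, hs⟩ := hprev
  -- not both degrees zero
  have hn : 0 < n1 ∨ 0 < n2 := by
    by_contra hno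
    push_neg at hno
    obtain ⟨h1, h2⟩ := hno
    have hz : p.totalDegree = 0 := by
      rw [totalDegree_eq_zero_iff]
      intro m hm x
      fin_cases x
      · have h : m 0 ≤ n1 := by
          rw [← hd1, degreeOf_eq_sup]; exact Finset.le_sup (f := fun m => m 0) hm
        show m 0 = 0
        omega
      · have h : m 1 ≤ n2 := by
          rw [← hd2, degreeOf_eq_sup]; exact Finset.le_sup (f := fun m => m 1) hm
        show m 1 = 0
        omega
    omega
  -- find a zero with both coordinates of modulus ≥ 1
  obtain ⟨w1, w2, ha1, ha2, hz⟩ :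
      ∃ w1 w2 : ℂ, 1 ≤ ‖w1‖ ∧ 1 ≤ ‖w2‖ ∧ eval ![w1, w2] p = 0 := by
    rcases hn with h | h
    · exact exists_zero n1 n2 p hd1 hd2 h hstable
    · exact exists_zero' n1 n2 p hd1 hd2 h hstable
  have hw1 : w1 ≠ 0 := by
    intro h0; rw [h0] at ha1; simp at ha1; linarith
  have hw2 : w2 ≠ 0 := by
    intro h0; rw [h0] at ha2; simp at ha2; linarith
  have hrev := eval_rev n1 n2 p hd1 hd2 w1 w2 hw1 hw2
  have hzero : eval ![w1, w2] (revPoly n1 n2 p) = 0 := by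
    rw [hs, map_mul, hz, zero_mul]
  rw [hzero] at hrev
  have hu1 : ‖((starRingEnd ℂ) w1)⁻¹‖ ≤ 1 := by
    rw [norm_inv, Complex.norm_conj]
    exact inv_le_one_of_one_le₀ ha1
  have hu2 : ‖((starRingEnd ℂ) w2)⁻¹‖ ≤ 1 := by
    rw [norm_inv, Complex.norm_conj]
    exact inv_le_one_of_one_le₀ ha2
  have hne := hstable _ _ hu1 hu2
  have : w1 ^ n1 * w2 ^ n2 *
      (starRingEnd ℂ) (eval ![((starRingEnd ℂ) w1)⁻¹, ((starRingEnd ℂ) w2)⁻¹] p) ≠ 0 := by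
    apply mul_ne_zero
    apply mul_ne_zero (pow_ne_zero _ hw1) (pow_ne_zero _ hw2)
    simpa using hne
  exact this hrev.symm
end

section
/- Let p be a semi-stable bivariate complex polynomial of bidegree (n1,n2) with p(0,0) = 1. If the coefficient of z1^{n1} z2^{n2} in p has modulus 1, then for every (z1,z2) on the unit torus (|z1| = |z2| = 1), all zeros of the one-variable polynomial t ↦ p(t·z1, t·z2) lie on the unit circle |t| = 1. -/
open MvPolynomial Polynomial

lemma eval_aeval_line (z1 z2 s : ℂ) (p : MvPolynomial (Fin 2) ℂ) :
    Polynomial.eval s (MvPolynomial.aeval (fun i => Polynomial.C (![z1,z2] i) * Polynomial.X) p)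
      = eval ![s * z1, s * z2] p := by
  rw [MvPolynomial.aeval_def,
    show Polynomial.eval s (MvPolynomial.eval₂ (algebraMap ℂ ℂ[X])
        (fun i => Polynomial.C (![z1,z2] i) * Polynomial.X) p)
      = (Polynomial.evalRingHom s) (MvPolynomial.eval₂ (algebraMap ℂ ℂ[X])
        (fun i => Polynomial.C (![z1,z2] i) * Polynomial.X) p) from rfl,
    MvPolynomial.eval₂_comp_left (Polynomial.evalRingHom s)]
  simp only [MvPolynomial.eval]
  congr 1
  · ext a; simp
  · funext i
    fin_cases i <;>
      simp only [Function.comp_apply, Matrix.cons_val_zero, Matrix.cons_val_one,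
        Matrix.head_cons, map_mul, Polynomial.coe_evalRingHom, Polynomial.eval_mul, Polynomial.eval_C, Polynomial.eval_X,
        Fin.isValue, Fin.zero_eta, Fin.mk_one] <;> ring

lemma coeff_aeval_line (z1 z2 : ℂ) (p : MvPolynomial (Fin 2) ℂ) (N : ℕ) :
    (MvPolynomial.aeval (fun i => Polynomial.C (![z1,z2] i) * Polynomial.X) p).coeff N
      = ∑ d ∈ p.support, if d 0 + d 1 = N then coeff d p * z1^(d 0) * z2^(d 1) else 0 := by
  rw [MvPolynomial.aeval_def, MvPolynomial.eval₂_eq', Polynomial.finset_sum_coeff]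
  refine Finset.sum_congr rfl fun d _ => ?_
  rw [Fin.prod_univ_two]
  simp only [Matrix.cons_val_zero, Matrix.cons_val_one, Matrix.head_cons]
  rw [show (algebraMap ℂ ℂ[X]) (coeff d p) * ((Polynomial.C z1 * Polynomial.X) ^ d 0 *
        (Polynomial.C z2 * Polynomial.X) ^ d 1)
      = Polynomial.C (coeff d p * z1 ^ d 0 * z2 ^ d 1) * Polynomial.X ^ (d 0 + d 1) by
    simp only [Polynomial.algebraMap_eq, map_mul, Polynomial.C_pow, mul_pow, pow_add]; ring]
  rw [Polynomial.coeff_C_mul, Polynomial.coeff_X_pow]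
  split <;> split <;> simp_all

theorem stmt7 (n1 n2 : ℕ) (p : MvPolynomial (Fin 2) ℂ)
    (h0 : coeff 0 p = 1)
    (hd1 : p.degreeOf 0 = n1) (hd2 : p.degreeOf 1 = n2)
    (hss : ∀ z1 z2 : ℂ, ‖z1‖ < 1 → ‖z2‖ < 1 →
      eval ![z1, z2] p ≠ 0)
    (htop : ‖
      (coeff (Finsupp.single (0 : Fin 2) n1 + Finsupp.single (1 : Fin 2) n2) p)‖ = 1) :
    ∀ z1 z2 : ℂ, ‖z1‖ = 1 → ‖z2‖ = 1 →
      ∀ t : ℂ, eval ![t * z1, t * z2] p = 0 → ‖t‖ = 1 := by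
  intro z1 z2 hz1 hz2 t ht
  set dstar : Fin 2 →₀ ℕ := Finsupp.single (0 : Fin 2) n1 + Finsupp.single (1 : Fin 2) n2
    with hdstar
  have hdstar0 : dstar 0 = n1 := by simp [hdstar, Finsupp.single_apply]
  have hdstar1 : dstar 1 = n2 := by simp [hdstar, Finsupp.single_apply]
  have hcstar : coeff dstar p ≠ 0 := by
    intro h; rw [h] at htop; simp at htop
  set q : Polynomial ℂ :=
    MvPolynomial.aeval (fun i => Polynomial.C (![z1,z2] i) * Polynomial.X) p with hq
  -- degree bounds on exponents in support
  have hle : ∀ d ∈ p.support, d 0 ≤ n1 ∧ d 1 ≤ n2 := by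
    intro d hd
    exact ⟨hd1 ▸ MvPolynomial.monomial_le_degreeOf 0 hd,
      hd2 ▸ MvPolynomial.monomial_le_degreeOf 1 hd⟩
  -- top coefficient of q
  have hqtop : q.coeff (n1 + n2) = coeff dstar p * z1 ^ n1 * z2 ^ n2 := by
    rw [hq, coeff_aeval_line]
    rw [Finset.sum_eq_single_of_mem dstar (by rwa [MvPolynomial.mem_support_iff])]
    · simp [hdstar0, hdstar1]
    · intro d hd hne
      rw [if_neg]
      intro hsum
      obtain ⟨hl1, hl2⟩ := hle d hd
      apply hne
      ext i
      fin_cases i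
      · show d 0 = dstar 0; rw [hdstar0]; omega
      · show d 1 = dstar 1; rw [hdstar1]; omega
  have habs_qtop : ‖q.coeff (n1 + n2)‖ = 1 := by
    rw [hqtop]
    simp [map_mul, map_pow, hz1, hz2, htop]
  have hqtop_ne : q.coeff (n1 + n2) ≠ 0 := by
    intro h; rw [h] at habs_qtop; simp at habs_qtop
  -- q has natDegree n1 + n2
  have hdegle : q.natDegree ≤ n1 + n2 := by
    rw [hq, MvPolynomial.aeval_def, MvPolynomial.eval₂_eq']
    refine Polynomial.natDegree_sum_le_of_forall_le _ _ fun d hd => ?_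
    obtain ⟨hl1, hl2⟩ := hle d hd
    refine le_trans (Polynomial.natDegree_mul_le) ?_
    rw [Fin.prod_univ_two]
    simp only [Polynomial.algebraMap_eq, Polynomial.natDegree_C, zero_add,
      Matrix.cons_val_zero, Matrix.cons_val_one, Matrix.head_cons]
    refine le_trans (Polynomial.natDegree_mul_le) ?_
    have h1 : (Polynomial.C z1 * Polynomial.X).natDegree ≤ 1 :=
      le_trans Polynomial.natDegree_mul_le (by simp)
    have h2 : (Polynomial.C z2 * Polynomial.X).natDegree ≤ 1 :=
      le_trans Polynomial.natDegree_mul_le (by simp)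
    have b1 : ((Polynomial.C z1 * Polynomial.X) ^ d 0).natDegree ≤ d 0 :=
      le_trans Polynomial.natDegree_pow_le
        (by simpa using Nat.mul_le_mul_left (d 0) h1)
    have b2 : ((Polynomial.C z2 * Polynomial.X) ^ d 1).natDegree ≤ d 1 :=
      le_trans Polynomial.natDegree_pow_le
        (by simpa using Nat.mul_le_mul_left (d 1) h2)
    omega
  have hdeg : q.natDegree = n1 + n2 :=
    le_antisymm hdegle (Polynomial.le_natDegree_of_ne_zero hqtop_ne)
  have hlead : ‖q.leadingCoeff‖ = 1 := by
    unfold Polynomial.leadingCoeff; rw [hdeg]; exact habs_qtop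
  have hq0 : q ≠ 0 := fun h => by simp [h] at hqtop_ne
  -- q.eval 0 = 1
  have hqeval0 : q.eval 0 = 1 := by
    rw [hq, eval_aeval_line]
    simp only [zero_mul]
    have : (![(0:ℂ), 0] : Fin 2 → ℂ) = fun _ => 0 := by
      funext i; fin_cases i <;> simp
    rw [this, show (fun _ => (0:ℂ)) = (0 : Fin 2 → ℂ) from rfl, MvPolynomial.eval_zero]
    rwa [MvPolynomial.constantCoeff_eq]
  -- all roots have abs ≥ 1
  have hroots_ge : ∀ r ∈ q.roots, 1 ≤ ‖r‖ := by
    intro r hr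
    by_contra hlt
    push_neg at hlt
    have hev : q.eval r = 0 := (Polynomial.mem_roots hq0).1 hr
    rw [hq, eval_aeval_line] at hev
    exact hss (r * z1) (r * z2) (by rw [norm_mul, hz1, mul_one]; exact hlt)
      (by rw [norm_mul, hz2, mul_one]; exact hlt) hev
  -- product of abs of roots = 1
  have hsplit := Polynomial.Splits.eq_prod_roots
    (IsAlgClosed.splits (k := ℂ) q)
  have h1 : (1:ℂ) = q.leadingCoeff * (q.roots.map fun a => -a).prod := by
    have h := congrArg (Polynomial.eval 0) hsplit
    rw [hqeval0] at h
    simpa [Polynomial.eval_multiset_prod, Multiset.map_map, Function.comp] using h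
  have hprod : (q.roots.map (‖·‖)).prod = 1 := by
    have h2 := congrArg (normHom : ℂ →*₀ ℝ) h1
    rw [map_one, map_mul, map_multiset_prod, Multiset.map_map] at h2
    rw [Multiset.map_congr rfl (fun x _ => by
      show ‖-x‖ = ‖x‖
      exact norm_neg _)] at h2
    change (1:ℝ) = ‖q.leadingCoeff‖ * _ at h2
    rw [hlead, one_mul] at h2
    exact h2.symm
  -- t is a root
  have hev : q.eval t = 0 := by rw [hq, eval_aeval_line]; exact ht
  have htmem : t ∈ q.roots := (Polynomial.mem_roots hq0).2 hev
  have hge : 1 ≤ ‖t‖ := hroots_ge t htmem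
  have herase : ‖t‖ * ((q.roots.erase t).map (‖·‖)).prod = 1 := by
    rw [Multiset.prod_map_erase (f := fun x => ‖x‖) htmem, hprod]
  have key : ∀ m : Multiset ℂ, (∀ r ∈ m, 1 ≤ ‖r‖) →
      1 ≤ (m.map (‖·‖)).prod := by
    intro m
    induction m using Multiset.induction_on with
    | empty => simp
    | cons a s ih =>
      intro h
      simp only [Multiset.map_cons, Multiset.prod_cons]
      have ha := h a (by simp)
      have hs := ih (fun r hr => h r (by simp [hr]))
      nlinarith
  have hP : 1 ≤ ((q.roots.erase t).map (‖·‖)).prod :=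
    key _ fun r hr => hroots_ge r (Multiset.mem_of_mem_erase hr)
  nlinarith [norm_nonneg t]
end

section
/- Let n = (n1,n2) ≠ (0,0), let K be a unitary (n1+n2)×(n1+n2) complex matrix, and let p(z1,z2) = det(I_{n1+n2} − K Z_n(z1,z2)). If p has bidegree exactly (n1,n2), then ←p = α·p with the unimodular constant α = det(−K*) (where K* is the conjugate transpose of K); in particular p is self-reversive up to a unimodular constant. -/
open MvPolynomial

/-- The diagonal matrix with `X 0` in the first `n1` diagonal entries and `X 1`
in the last `n2` diagonal entries, over the bivariate polynomial ring. -/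
noncomputable def ZnPoly (n1 n2 : ℕ) :
    Matrix (Fin (n1 + n2)) (Fin (n1 + n2)) (MvPolynomial (Fin 2) ℂ) :=
  Matrix.diagonal fun i => if (i : ℕ) < n1 then X 0 else X 1

/- ### Auxiliary lemmas -/

lemma stmt11_card_lt_aux (n1 n2 : ℕ) :
    (Finset.univ.filter fun i : Fin (n1 + n2) => (i : ℕ) < n1).card = n1 := by
  rw [Finset.card_filter, Fin.sum_univ_eq_sum_range (fun i => if i < n1 then (1:ℕ) else 0),
    ← Finset.sum_filter]
  have : (Finset.range (n1+n2)).filter (fun i => i < n1) = Finset.range n1 := by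
    ext i; simp; omega
  simp [this]

lemma stmt11_prod_ite_aux (n1 n2 : ℕ) (a b : ℂ) :
    (∏ i : Fin (n1 + n2), if (i : ℕ) < n1 then a else b) = a ^ n1 * b ^ n2 := by
  rw [Finset.prod_ite]
  have h1 := stmt11_card_lt_aux n1 n2
  have h2 := Finset.card_filter_add_card_filter_not
    (s := (Finset.univ : Finset (Fin (n1+n2)))) (p := fun i : Fin (n1+n2) => (i : ℕ) < n1)
  simp only [Finset.prod_const, Finset.card_univ, Fintype.card_fin] at *
  have hc : (Finset.univ.filter fun i : Fin (n1+n2) => ¬ (i : ℕ) < n1).card = n2 := by omega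
  rw [h1, hc]

lemma stmt11_finsupp_fin2 (m : Fin 2 →₀ ℕ) :
    Finsupp.single (0 : Fin 2) (m 0) + Finsupp.single (1 : Fin 2) (m 1) = m := by
  ext i; fin_cases i <;> simp [Finsupp.single_apply]

lemma stmt11_cond_iff (j k : ℕ) (m : Fin 2 →₀ ℕ) :
    Finsupp.single (0:Fin 2) j + Finsupp.single (1:Fin 2) k = m ↔ j = m 0 ∧ k = m 1 := by
  constructor
  · rintro rfl; simp [Finsupp.single_apply]
  · rintro ⟨rfl, rfl⟩; exact stmt11_finsupp_fin2 m

lemma stmt11_box_expand (n1 n2 : ℕ) (p : MvPolynomial (Fin 2) ℂ)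
    (h1 : p.degreeOf 0 ≤ n1) (h2 : p.degreeOf 1 ≤ n2) :
    p = ∑ j ∈ Finset.range (n1+1), ∑ k ∈ Finset.range (n2+1),
      monomial (Finsupp.single (0:Fin 2) j + Finsupp.single (1:Fin 2) k)
        (coeff (Finsupp.single (0:Fin 2) j + Finsupp.single (1:Fin 2) k) p) := by
  rw [MvPolynomial.ext_iff]
  intro m
  rw [degreeOf_le_iff] at h1 h2
  simp only [coeff_sum, coeff_monomial, stmt11_cond_iff, ite_and]
  rw [Finset.sum_comm]
  by_cases hm2 : m 1 ≤ n2
  swap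
  · have hz : coeff m p = 0 := by
      by_contra h
      exact hm2 (h2 m (mem_support_iff.mpr h))
    rw [hz]; symm
    apply Finset.sum_eq_zero
    intro k hk
    apply Finset.sum_eq_zero
    intro j hj
    have hne : ¬ (k = m 1) := by simp at hk; omega
    simp [hne]
  rw [Finset.sum_eq_single (m 1)]
  · by_cases hm1 : m 0 ≤ n1
    · rw [Finset.sum_eq_single (m 0)]
      · simp [stmt11_finsupp_fin2]
      · intro j _ hj
        simp [hj]
      · intro h; exact absurd (Finset.mem_range.mpr (by omega)) h
    · have hz : coeff m p = 0 := by
        by_contra h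
        exact hm1 (h1 m (mem_support_iff.mpr h))
      rw [hz]; symm
      apply Finset.sum_eq_zero
      intro j hj
      have hne : ¬ (j = m 0) := by simp at hj; omega
      simp [hne]
  · intro k _ hk
    apply Finset.sum_eq_zero
    intro j _
    simp [hk]
  · intro h; exact absurd (Finset.mem_range.mpr (by omega)) h

lemma stmt11_eval_mono (z : Fin 2 → ℂ) (a : ℂ) (j k : ℕ) :
    eval z (monomial (Finsupp.single (0:Fin 2) j + Finsupp.single (1:Fin 2) k) a)
      = a * z 0 ^ j * z 1 ^ k := by
  rw [eval_monomial, Finsupp.prod_add_index' (fun i => pow_zero _) (fun i m n => pow_add _ _ _)]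
  simp [Finsupp.prod_single_index, mul_assoc]

lemma stmt11_main_eval (n1 n2 : ℕ) (p : MvPolynomial (Fin 2) ℂ)
    (h1 : p.degreeOf 0 ≤ n1) (h2 : p.degreeOf 1 ≤ n2)
    (z : Fin 2 → ℂ) (h0 : z 0 ≠ 0) (h1' : z 1 ≠ 0) :
    eval z (revPoly n1 n2 p)
      = z 0 ^ n1 * z 1 ^ n2 * star (eval (fun i => (star (z i))⁻¹) p) := by
  set w : Fin 2 → ℂ := fun i => (star (z i))⁻¹ with hw
  have hRHS : eval w p = ∑ j ∈ Finset.range (n1+1), ∑ k ∈ Finset.range (n2+1),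
      coeff (Finsupp.single (0:Fin 2) j + Finsupp.single (1:Fin 2) k) p * w 0 ^ j * w 1 ^ k := by
    conv_lhs => rw [stmt11_box_expand n1 n2 p h1 h2]
    simp only [map_sum, stmt11_eval_mono]
  rw [hRHS]
  rw [star_sum]
  rw [Finset.mul_sum]
  rw [revPoly]
  simp only [map_sum, stmt11_eval_mono, star_sum, Finset.mul_sum]
  refine Finset.sum_bij' (fun j _ => n1 - j) (fun j _ => n1 - j) ?_ ?_ ?_ ?_ ?_
  · intro a ha; simp at ha ⊢
  · intro a ha; simp at ha ⊢
  · intro a ha; simp at ha ⊢; omega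
  · intro a ha; simp at ha ⊢; omega
  · intro a ha
    simp only [Finset.mem_range] at ha
    refine Finset.sum_bij' (fun k _ => n2 - k) (fun k _ => n2 - k) ?_ ?_ ?_ ?_ ?_
    · intro b hb; simp at hb ⊢
    · intro b hb; simp at hb ⊢
    · intro b hb; simp at hb ⊢; omega
    · intro b hb; simp at hb ⊢; omega
    · intro b hb
      simp only [Finset.mem_range] at hb
      have ha' : a ≤ n1 := by omega
      have hb' : b ≤ n2 := by omega
      have hw0 : star (w 0) = (z 0)⁻¹ := by simp [w]
      have hw1 : star (w 1) = (z 1)⁻¹ := by simp [w]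
      rw [star_mul', star_mul', star_pow, star_pow, hw0, hw1, inv_pow, inv_pow]
      have e0 : z 0 ^ n1 * (z 0 ^ (n1 - a))⁻¹ = z 0 ^ a := by
        rw [← pow_sub₀ _ h0 (Nat.sub_le _ _), Nat.sub_sub_self ha']
      have e1 : z 1 ^ n2 * (z 1 ^ (n2 - b))⁻¹ = z 1 ^ b := by
        rw [← pow_sub₀ _ h1' (Nat.sub_le _ _), Nat.sub_sub_self hb']
      rw [(by intros; ring : ∀ (S u v x y : ℂ), u * v * (S * x * y) = S * (u * x) * (v * y)),
        e0, e1]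
      simp [Complex.star_def]

lemma stmt11_eval_p (n1 n2 : ℕ) (K : Matrix (Fin (n1+n2)) (Fin (n1+n2)) ℂ) (z : Fin 2 → ℂ) :
    eval z ((1 - K.map MvPolynomial.C * ZnPoly n1 n2).det)
      = (1 - K * Matrix.diagonal (fun i : Fin (n1+n2) => if (i:ℕ) < n1 then z 0 else z 1)).det := by
  rw [RingHom.map_det, RingHom.mapMatrix_apply]
  congr 1
  have h1 : (K.map ⇑MvPolynomial.C).map ⇑(eval z) = K := by
    rw [Matrix.map_map]; ext a b; simp
  have h2 : (ZnPoly n1 n2).map ⇑(eval z)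
      = Matrix.diagonal (fun i : Fin (n1+n2) => if (i:ℕ) < n1 then z 0 else z 1) := by
    rw [show ZnPoly n1 n2 = Matrix.diagonal (fun i : Fin (n1+n2) =>
      if (i:ℕ) < n1 then (X 0 : MvPolynomial (Fin 2) ℂ) else X 1) from rfl,
      Matrix.diagonal_map (map_zero _)]
    have : (fun i : Fin (n1+n2) => (eval z) (if (i:ℕ) < n1 then (X 0 : MvPolynomial (Fin 2) ℂ) else X 1))
        = fun i : Fin (n1+n2) => if (i:ℕ) < n1 then z 0 else z 1 := by
      funext i
      by_cases h : (i:ℕ) < n1 <;> simp [h]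
    rw [this]
  rw [Matrix.map_sub _ (fun a b => map_sub (eval z) a b), Matrix.map_one _ (map_zero _) (map_one _),
    Matrix.map_mul, h1, h2]

lemma stmt11_key_det (n1 n2 : ℕ) (K : Matrix (Fin (n1+n2)) (Fin (n1+n2)) ℂ)
    (hK : K.conjTranspose * K = 1) (z0 z1 : ℂ) (h0 : z0 ≠ 0) (h1 : z1 ≠ 0) :
    z0 ^ n1 * z1 ^ n2 *
      star ((1 - K * Matrix.diagonal (fun i : Fin (n1+n2) =>
        if (i:ℕ) < n1 then ((starRingEnd ℂ) z0)⁻¹ else ((starRingEnd ℂ) z1)⁻¹)).det)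
    = (-K.conjTranspose).det *
      (1 - K * Matrix.diagonal (fun i : Fin (n1+n2) => if (i:ℕ) < n1 then z0 else z1)).det := by
  set D : Matrix (Fin (n1+n2)) (Fin (n1+n2)) ℂ :=
    Matrix.diagonal (fun i : Fin (n1+n2) => if (i:ℕ) < n1 then z0 else z1) with hD
  set Dinv : Matrix (Fin (n1+n2)) (Fin (n1+n2)) ℂ :=
    Matrix.diagonal (fun i : Fin (n1+n2) => if (i:ℕ) < n1 then z0⁻¹ else z1⁻¹) with hDinv
  have hDdet : D.det = z0 ^ n1 * z1 ^ n2 := by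
    rw [hD, Matrix.det_diagonal, stmt11_prod_ite_aux]
  have hDDinv : D * Dinv = 1 := by
    have hfun : (fun i : Fin (n1+n2) =>
        (if (i:ℕ) < n1 then z0 else z1) * (if (i:ℕ) < n1 then z0⁻¹ else z1⁻¹))
        = fun _ => (1:ℂ) := by
      funext i
      by_cases h : (i:ℕ) < n1 <;> simp [h, h0, h1]
    rw [hD, hDinv, Matrix.diagonal_mul_diagonal, hfun, Matrix.diagonal_one]
  have hstar : star ((1 - K * Matrix.diagonal (fun i : Fin (n1+n2) =>
        if (i:ℕ) < n1 then ((starRingEnd ℂ) z0)⁻¹ else ((starRingEnd ℂ) z1)⁻¹)).det)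
      = (1 - Dinv * K.conjTranspose).det := by
    rw [← Matrix.det_conjTranspose]
    congr 1
    rw [Matrix.conjTranspose_sub, Matrix.conjTranspose_one, Matrix.conjTranspose_mul,
      Matrix.diagonal_conjTranspose]
    have hfun : (star fun i : Fin (n1+n2) =>
        if (i:ℕ) < n1 then ((starRingEnd ℂ) z0)⁻¹ else ((starRingEnd ℂ) z1)⁻¹)
        = fun i : Fin (n1+n2) => if (i:ℕ) < n1 then z0⁻¹ else z1⁻¹ := by
      funext i
      by_cases h : (i:ℕ) < n1 <;> simp [h, Complex.star_def]
    rw [hfun, hDinv]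
  rw [hstar, ← hDdet, ← Matrix.det_mul, Matrix.mul_sub, Matrix.mul_one, ← Matrix.mul_assoc,
    hDDinv, Matrix.one_mul]
  rw [← Matrix.det_mul, Matrix.mul_sub, Matrix.mul_one, ← Matrix.mul_assoc]
  have hneg : -K.conjTranspose * K = -1 := by rw [Matrix.neg_mul, hK]
  rw [hneg, neg_one_mul, sub_neg_eq_add]
  congr 1
  abel

theorem stmt11 (n1 n2 : ℕ) (hn : (n1, n2) ≠ (0, 0))
    (K : Matrix (Fin (n1 + n2)) (Fin (n1 + n2)) ℂ)
    (hK : K ∈ Matrix.unitaryGroup (Fin (n1 + n2)) ℂ)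
    (p : MvPolynomial (Fin 2) ℂ)
    (hp : p = (1 - K.map MvPolynomial.C * ZnPoly n1 n2).det)
    (hd1 : p.degreeOf 0 = n1) (hd2 : p.degreeOf 1 = n2) :
    ‖(-K.conjTranspose).det‖ = 1 ∧ revPoly n1 n2 p = C ((-K.conjTranspose).det) * p := by
  have hKK : K.conjTranspose * K = 1 := hK.1
  constructor
  · have hdet : star K.det * K.det = 1 := by
      have h := congrArg Matrix.det hKK
      rwa [Matrix.det_mul, Matrix.det_one, Matrix.det_conjTranspose] at h
    have habs : ‖K.det‖ = 1 := by
      have h := congrArg norm hdet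
      rw [norm_mul, norm_one, Complex.star_def, Complex.norm_conj] at h
      rcases mul_self_eq_one_iff.mp h with h' | h'
      · exact h'
      · have := norm_nonneg K.det; linarith
    rw [Matrix.det_neg, norm_mul, norm_pow]
    have hone : ‖(-1 : ℂ)‖ = 1 := by simp
    rw [hone, one_pow, one_mul, Matrix.det_conjTranspose, Complex.star_def, Complex.norm_conj,
      habs]
  · set α : ℂ := (-K.conjTranspose).det with hα
    apply mul_right_cancel₀ (b := (X 0 * X 1 : MvPolynomial (Fin 2) ℂ))
      (mul_ne_zero (X_ne_zero 0) (X_ne_zero 1))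
    apply MvPolynomial.funext
    intro z
    by_cases h0 : z 0 = 0
    · simp [h0]
    by_cases h1 : z 1 = 0
    · simp [h1]
    simp only [map_mul, eval_X, eval_C]
    congr 1
    rw [stmt11_main_eval n1 n2 p (le_of_eq hd1) (le_of_eq hd2) z h0 h1]
    have hw0 : ((star (z 0))⁻¹ : ℂ) ≠ 0 := by
      simp [h0]
    have hw1 : ((star (z 1))⁻¹ : ℂ) ≠ 0 := by
      simp [h1]
    rw [hp, stmt11_eval_p, stmt11_eval_p]
    have hd : (Matrix.diagonal fun i : Fin (n1+n2) =>
        if (i:ℕ) < n1 then (fun i => (star (z i))⁻¹) 0 else (fun i => (star (z i))⁻¹) 1)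
        = Matrix.diagonal fun i : Fin (n1+n2) =>
          if (i:ℕ) < n1 then ((starRingEnd ℂ) (z 0))⁻¹ else ((starRingEnd ℂ) (z 1))⁻¹ := by
      rfl
    rw [hd]
    exact stmt11_key_det n1 n2 K hKK (z 0) (z 1) h0 h1
end

section
/- Let M be a polynomial in one complex variable with coefficients that are d×d complex Hermitian matrices (i.e., M(s) = B_0 + B_1 s + ... + B_k s^k with each B_j Hermitian, B_k ≠ 0). If the bivariate polynomial det(t·I_d − M(s)) in the variables (t,s) has total degree at most d, then M is linear, i.e., k ≤ 1. -/
open MvPolynomial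

open scoped ComplexOrder in
lemma herm_two_pow_zero {d : ℕ} (A : Matrix (Fin d) (Fin d) ℂ) (hA : A.IsHermitian)
    (n : ℕ) (h : A ^ (2 ^ n) = 0) : A = 0 := by
  induction n with
  | zero => simpa using h
  | succ n ih =>
    apply ih
    have h' : A ^ (2 ^ n) * A ^ (2 ^ n) = 0 := by
      rw [← pow_add, ← mul_two, ← pow_succ]; exact h
    rw [← Matrix.conjTranspose_mul_self_eq_zero (A := A ^ (2 ^ n)), hA.pow (2 ^ n)]
    exact h'

lemma herm_pow_zero {d : ℕ} (A : Matrix (Fin d) (Fin d) ℂ) (hA : A.IsHermitian)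
    {n : ℕ} (h : A ^ n = 0) : A = 0 := by
  apply herm_two_pow_zero A hA n
  have h2 : n ≤ 2 ^ n := Nat.le_of_lt (Nat.lt_two_pow_self (n := n))
  calc A ^ (2 ^ n) = A ^ n * A ^ (2 ^ n - n) := by rw [← pow_add]; congr 1; omega
  _ = 0 := by rw [h, zero_mul]

theorem stmt15 (d k : ℕ) (B : Fin (k + 1) → Matrix (Fin d) (Fin d) ℂ)
    (hHerm : ∀ l, (B l).IsHermitian) (hBk : B (Fin.last k) ≠ 0)
    (hdeg : (Matrix.det (Matrix.of fun i j : Fin d =>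
        (if i = j then X 0 else 0) -
          ∑ l : Fin (k + 1), C (B l i j) * X 1 ^ (l : ℕ))).totalDegree ≤ d) :
    k ≤ 1 := by
  by_contra hk
  push_neg at hk
  have hk2 : 2 ≤ k := hk
  rcases Nat.eq_zero_or_pos d with hd0 | hd0
  · subst hd0
    exact hBk (Subsingleton.elim _ _)
  set M : Matrix (Fin d) (Fin d) (MvPolynomial ℕ ℂ) := Matrix.of fun i j : Fin d =>
        (if i = j then X 0 else 0) -
          ∑ l : Fin (k + 1), C (B l i j) * X 1 ^ (l : ℕ) with hM
  set P : MvPolynomial ℕ ℂ := M.det with hP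
  set Bk := B (Fin.last k) with hBkdef
  set f : ℕ → Polynomial (Polynomial ℂ) :=
    fun n => if n = 0 then Polynomial.C Polynomial.X * Polynomial.X ^ k else Polynomial.X
    with hfdef
  set N : Matrix (Fin d) (Fin d) (Polynomial (Polynomial ℂ)) := Matrix.of fun i j =>
    (if i = j then Polynomial.C Polynomial.X * Polynomial.X ^ k else 0) -
      ∑ l : Fin (k + 1), Polynomial.C (Polynomial.C (B l i j)) * Polynomial.X ^ (l : ℕ)
    with hN
  -- the image of P
  have hmap : (aeval f) P = N.det := by
    rw [hP, AlgHom.map_det]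
    refine congrArg _ (Matrix.ext fun i j => ?_)
    simp only [hM, hN, AlgHom.mapMatrix_apply, RingHom.coe_coe, Matrix.map_apply, Matrix.of_apply, map_sub, map_sum,
      map_mul, map_pow, aeval_X, aeval_C, apply_ite (aeval f), map_zero, hfdef, if_pos rfl,
      if_neg (one_ne_zero (α := ℕ)), Polynomial.algebraMap_apply, Algebra.algebraMap_self_apply,
      if_true]
    split <;> simp
  -- entries of N : degree bound and top coefficient
  have hdegN : ∀ i j, (N i j).natDegree ≤ k := by
    intro i j
    refine le_trans (Polynomial.natDegree_sub_le _ _) (max_le ?_ ?_)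
    · split
      · refine le_trans (Polynomial.natDegree_mul_le) ?_
        simp [Polynomial.natDegree_X_pow]
      · simp
    · refine Polynomial.natDegree_sum_le_of_forall_le _ _ ?_
      intro l _
      refine le_trans (Polynomial.natDegree_mul_le) ?_
      simp [Polynomial.natDegree_X_pow]
      exact Nat.lt_succ_iff.mp l.isLt
  have hcoeffN : ∀ i j, (N i j).coeff k = Matrix.charmatrix Bk i j := by
    intro i j
    rw [hN]
    simp only [Matrix.of_apply, Polynomial.coeff_sub]
    rw [Polynomial.finset_sum_coeff]
    have h1 : (if i = j then Polynomial.C (Polynomial.X (R := ℂ)) * Polynomial.X ^ k else 0).coeff k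
        = if i = j then Polynomial.X else 0 := by
      split <;> simp [Polynomial.coeff_C_mul, Polynomial.coeff_X_pow]
    have h2 : ∀ l : Fin (k + 1),
        (Polynomial.C (Polynomial.C (B l i j)) * Polynomial.X ^ (l : ℕ)).coeff k
          = if l = Fin.last k then Polynomial.C (B l i j) else 0 := by
      intro l
      rw [Polynomial.coeff_C_mul, Polynomial.coeff_X_pow]
      by_cases hl : l = Fin.last k
      · simp [hl, Fin.val_last]
      · have : (k : ℕ) ≠ (l : ℕ) := by
          intro hh
          exact hl (Fin.ext (by simp [Fin.val_last, hh.symm]))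
        simp [this, hl]
    rw [h1, Finset.sum_congr rfl (fun l _ => h2 l), Finset.sum_ite_eq' Finset.univ (Fin.last k)]
    simp [Matrix.charmatrix_apply, Matrix.diagonal_apply, hBkdef]
  -- Side A : coefficient of the determinant
  have hA : ((aeval f) P).coeff (d * k) = Bk.charpoly := by
    rw [hmap, Matrix.det_apply, Polynomial.finset_sum_coeff, Matrix.charpoly,
      Matrix.det_apply]
    refine Finset.sum_congr rfl ?_
    intro σ _
    rw [Polynomial.coeff_smul]
    congr 1
    have := Polynomial.coeff_prod_of_natDegree_le (s := (Finset.univ : Finset (Fin d)))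
      (fun i => N (σ i) i) k (fun i _ => hdegN (σ i) i)
    simp only [Finset.card_univ, Fintype.card_fin] at this
    rw [this]
    exact Finset.prod_congr rfl fun i _ => hcoeffN (σ i) i
  -- Side B : coefficient via total degree
  have hterm : ∀ (m : ℕ →₀ ℕ) (c : ℂ), (aeval f) (monomial m c) =
      Polynomial.C (Polynomial.C c * Polynomial.X ^ (m 0)) *
        Polynomial.X ^ (k * (m 0) + (m.erase 0).sum fun _ e => e) := by
    intro m c
    rw [aeval_monomial]
    rw [← Finsupp.mul_prod_erase' m 0 (fun n e => f n ^ e) (by intro i; simp)]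
    have herase : ((m.erase 0).prod fun n e => f n ^ e)
        = Polynomial.X ^ ((m.erase 0).sum fun _ e => e) := by
      rw [Finsupp.prod, Finsupp.sum, ← Finset.prod_pow_eq_pow_sum]
      refine Finset.prod_congr rfl ?_
      intro n hn
      have : n ≠ 0 := by
        rintro rfl
        simp [Finsupp.mem_support_iff, Finsupp.erase_same] at hn
      simp [hfdef, this]
    rw [herase]
    have hf0 : f 0 = Polynomial.C Polynomial.X * Polynomial.X ^ k := by simp [hfdef]
    rw [hf0]
    simp only [Polynomial.algebraMap_apply, Algebra.algebraMap_self_apply, mul_pow, ← Polynomial.C_pow,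
      ← pow_mul, map_mul, pow_add]
    ring
  have hsupp : ∀ m ∈ P.support, (m 0) + ((m.erase 0).sum fun _ e => e) ≤ d := by
    intro m hm
    have h1 : (m.sum fun _ e => e) ≤ d := le_trans (le_totalDegree hm) hdeg
    have h2 : (m.sum fun _ e => e) = m 0 + ((m.erase 0).sum fun _ e => e) := by
      conv_lhs => rw [← Finsupp.single_add_erase 0 m]
      rw [Finsupp.sum_add_index' (by simp) (by intros; rfl)]
      rw [Finsupp.sum_single_index (by rfl)]
    omega
  have hB2 : ((aeval f) P).coeff (d * k) =
      Polynomial.C (MvPolynomial.coeff (Finsupp.single 0 d) P) * Polynomial.X ^ d := by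
    conv_lhs => rw [P.as_sum, map_sum, Polynomial.finset_sum_coeff]
    have hval : ∀ m : ℕ →₀ ℕ, ((aeval f) (monomial m (MvPolynomial.coeff m P))).coeff (d * k)
        = if d * k = k * (m 0) + ((m.erase 0).sum fun _ e => e)
          then Polynomial.C (MvPolynomial.coeff m P) * Polynomial.X ^ (m 0) else 0 := by
      intro m
      rw [hterm, Polynomial.coeff_C_mul, Polynomial.coeff_X_pow, mul_ite, mul_one, mul_zero]
    rw [Finset.sum_congr rfl fun m _ => hval m]
    rw [Finset.sum_eq_single (Finsupp.single (0 : ℕ) d)]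
    · rw [if_pos]
      · simp
      · simp [Finsupp.erase_single, mul_comm]
    · intro m hm hne
      rw [if_neg]
      intro heq
      apply hne
      have hbd := hsupp m hm
      set r := (m.erase 0).sum fun _ e => e with hr
      -- arithmetic : from d*k = k*(m 0) + r, m 0 + r ≤ d, 2 ≤ k conclude m 0 = d, r = 0
      have hm0 : m 0 ≤ d := by omega
      set e := d - m 0 with he
      have hde : d = m 0 + e := by omega
      have hkk : d * k = k * (m 0) + k * e := by rw [hde]; ring
      have hre : r = k * e := by
        have := heq.symm.trans hkk
        omega
      have h2e : 2 * e ≤ k * e := Nat.mul_le_mul_right e hk2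
      have hre2 : r ≤ e := by omega
      have he0 : e = 0 := by omega
      have hm0d : m 0 = d := by omega
      have hrz : r = 0 := by omega
      have herz : m.erase 0 = 0 := by
        ext a
        by_cases ha : (m.erase 0) a = 0
        · simp [ha]
        · exfalso
          have hmem : a ∈ (m.erase 0).support := Finsupp.mem_support_iff.mpr ha
          have := (Finset.sum_eq_zero_iff).mp hrz a hmem
          exact ha this
      ext a
      rcases eq_or_ne a 0 with rfl | ha
      · simp [hm0d]
      · have : (m.erase 0) a = m a := Finsupp.erase_ne ha
        rw [Finsupp.single_apply, if_neg (by exact fun h => ha h.symm)]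
        rw [← this, herz]
        rfl
    · intro hnot
      rw [MvPolynomial.notMem_support_iff.mp hnot]
      simp
  -- combine
  have hchar : Bk.charpoly =
      Polynomial.C (MvPolynomial.coeff (Finsupp.single 0 d) P) * Polynomial.X ^ d := by
    rw [← hA, hB2]
  set c := MvPolynomial.coeff (Finsupp.single 0 d) P with hc
  have hc0 : c ≠ 0 := by
    intro h
    apply (Matrix.charpoly_monic Bk).ne_zero
    rw [hchar, h]
    simp
  have hCH := Matrix.aeval_self_charpoly Bk
  rw [hchar] at hCH
  rw [map_mul, Polynomial.aeval_C, map_pow, Polynomial.aeval_X] at hCH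
  rw [← Algebra.smul_def] at hCH
  have hBd : Bk ^ d = 0 := by
    rcases smul_eq_zero.mp hCH with h | h
    · exact absurd h hc0
    · exact h
  exact hBk (herm_pow_zero Bk (hHerm _) hBd)
end

section
/- Let p be a bivariate real polynomial with p(x1,x2) = det(I_2 + x1·A1 + x2·A2) for all (x1,x2) ∈ ℝ², where A1 and A2 are 2×2 complex Hermitian matrices. Then there exist 2×2 real symmetric matrices Â1 and Â2 such that p(x1,x2) = det(I_2 + x1·Â1 + x2·Â2) for all (x1,x2) ∈ ℝ². -/
open MvPolynomial Matrix

theorem stmt17 (p : MvPolynomial (Fin 2) ℝ)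
    (A1 A2 : Matrix (Fin 2) (Fin 2) ℂ)
    (hA1H : A1.IsHermitian) (hA2H : A2.IsHermitian)
    (hrep : ∀ x1 x2 : ℝ, (eval ![x1, x2] p : ℂ) =
      (1 + (x1 : ℂ) • A1 + (x2 : ℂ) • A2).det) :
    ∃ B1 B2 : Matrix (Fin 2) (Fin 2) ℝ, B1.IsSymm ∧ B2.IsSymm ∧
      ∀ x1 x2 : ℝ, eval ![x1, x2] p = (1 + x1 • B1 + x2 • B2).det := by
  obtain ⟨V, hVdef⟩ : ∃ V, V = (hA1H.eigenvectorUnitary : Matrix (Fin 2) (Fin 2) ℂ) := ⟨_, rfl⟩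
  have hV1 : V * star V = 1 := by
    rw [hVdef]; exact (Matrix.mem_unitaryGroup_iff).mp (hA1H.eigenvectorUnitary).2
  have hV2 : star V * V = 1 := by
    rw [hVdef]; exact (Matrix.mem_unitaryGroup_iff').mp (hA1H.eigenvectorUnitary).2
  obtain ⟨D, hDdef⟩ : ∃ D, D = Matrix.diagonal (RCLike.ofReal ∘ hA1H.eigenvalues : Fin 2 → ℂ) :=
    ⟨_, rfl⟩
  have hspec : A1 = V * D * star V := by rw [hVdef, hDdef]; exact hA1H.spectral_theorem
  obtain ⟨M, hM⟩ : ∃ M, M = star V * A2 * V := ⟨_, rfl⟩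
  have hA2' : A2 = V * M * star V := by
    rw [hM]
    simp only [← mul_assoc, hV1, one_mul]
    rw [mul_assoc, hV1, mul_one]
  have hMH : M.IsHermitian := by
    unfold Matrix.IsHermitian
    rw [hM]
    simp only [Matrix.star_eq_conjTranspose, Matrix.conjTranspose_mul,
      Matrix.conjTranspose_conjTranspose, hA2H.eq, mul_assoc]
  have hM00 : M 0 0 = ((M 0 0).re : ℂ) := (Complex.conj_eq_iff_re.mp (hMH.apply 0 0)).symm
  have hM11 : M 1 1 = ((M 1 1).re : ℂ) := (Complex.conj_eq_iff_re.mp (hMH.apply 1 1)).symm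
  have hM10 : M 1 0 = star (M 0 1) := (hMH.apply 1 0).symm
  have hD00 : D 0 0 = ((hA1H.eigenvalues 0 : ℝ) : ℂ) := by rw [hDdef]; simp
  have hD11 : D 1 1 = ((hA1H.eigenvalues 1 : ℝ) : ℂ) := by rw [hDdef]; simp
  have hD01 : D 0 1 = 0 := by rw [hDdef]; simp [Matrix.diagonal_apply]
  have hD10 : D 1 0 = 0 := by rw [hDdef]; simp [Matrix.diagonal_apply]
  refine ⟨Matrix.diagonal hA1H.eigenvalues,
    !![(M 0 0).re, ‖M 0 1‖; ‖M 0 1‖, (M 1 1).re], ?_, ?_, ?_⟩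
  · exact Matrix.isSymm_diagonal _
  · unfold Matrix.IsSymm
    ext i j
    fin_cases i <;> fin_cases j <;> simp
  · intro x1 x2
    have key : (1 : Matrix (Fin 2) (Fin 2) ℂ) + (x1 : ℂ) • A1 + (x2 : ℂ) • A2
        = V * (1 + (x1 : ℂ) • D + (x2 : ℂ) • M) * star V := by
      rw [hspec, hA2']
      simp only [Matrix.mul_add, Matrix.add_mul, Matrix.mul_smul, Matrix.smul_mul,
        Matrix.mul_one, hV1, mul_assoc]
    have hdet : (1 + (x1 : ℂ) • A1 + (x2 : ℂ) • A2).det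
        = (1 + (x1 : ℂ) • D + (x2 : ℂ) • M).det := by
      rw [key, Matrix.det_mul, Matrix.det_mul, mul_comm, ← mul_assoc, ← Matrix.det_mul, hV2]
      simp
    have habs : M 0 1 * star (M 0 1) = ((‖M 0 1‖ : ℝ) : ℂ) ^ 2 := by
      rw [show star (M 0 1) = (starRingEnd ℂ) (M 0 1) from rfl, Complex.mul_conj]
      push_cast [← Complex.sq_norm]
      rfl
    apply Complex.ofReal_injective
    rw [hrep, hdet, Matrix.det_fin_two, Matrix.det_fin_two]
    simp only [Matrix.add_apply, Matrix.smul_apply, smul_eq_mul, Matrix.one_apply_eq,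
      Matrix.one_apply_ne (by decide : (0 : Fin 2) ≠ 1),
      Matrix.one_apply_ne (by decide : (1 : Fin 2) ≠ 0),
      Matrix.cons_val', Matrix.cons_val_zero, Matrix.cons_val_one, Matrix.head_cons,
      Matrix.head_fin_const, Matrix.empty_val', Matrix.cons_val_fin_one, Matrix.of_apply]
    rw [hM00, hM11, hM10, hD00, hD11, hD01, hD10]
    simp only [Matrix.diagonal_apply_eq, Matrix.diagonal_apply_ne _ (by decide : (0 : Fin 2) ≠ 1),
      Matrix.diagonal_apply_ne _ (by decide : (1 : Fin 2) ≠ 0), Complex.ofReal_re]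
    push_cast
    linear_combination (-(x2 : ℂ)^2) * habs
end
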